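/- For every M ≥ 0: S_M(1) = ∏_{j=1}^{M} (2j−3) / (M!·2^M), where the empty product (M = 0) equals 1. -/
import Mathlib


/-- `S_M(m) := Σ_{r=0}^{M} (−1/4)^r · (2m+2r−1)! / (r!·(m+r−1)!) · C(m−1+M, m−1+r)`. -/
def Sdef (M m : ℕ) : ℚ :=
  ∑ r ∈ Finset.range (M + 1),
    (-1 / 4 : ℚ) ^ r * ((2 * m + 2 * r - 1).factorial : ℚ) /
        ((r.factorial : ℚ) * ((m + r - 1).factorial : ℚ)) *
      ((m - 1 + M).choose (m - 1 + r) : ℚ)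

/-- The summand of `S_M(1)`. -/
noncomputable def Aq (M r : ℕ) : ℚ :=
  (-1 / 4 : ℚ) ^ r * ((2 * r + 1).factorial : ℚ) /
    ((r.factorial : ℚ) * (r.factorial : ℚ)) * (M.choose r : ℚ)

/-- WZ certificate. -/
noncomputable def Gq (M r : ℕ) : ℚ :=
  -(r : ℚ) ^ 2 * (((M + 1).choose r : ℚ)) / ((M : ℚ) + 1) ^ 2 *
    (-1 / 4 : ℚ) ^ r * ((2 * r + 1).factorial : ℚ) / ((r.factorial : ℚ) * (r.factorial : ℚ))

lemma choose_cast1 (M r : ℕ) :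
    (((M + 1).choose (r + 1) : ℚ)) * (r + 1) = ((M : ℚ) + 1 - r) * ((M + 1).choose r : ℚ) := by
  rcases le_or_gt r (M + 1) with h | h
  · have := Nat.choose_succ_right_eq (M + 1) r
    have hc : (((M + 1).choose (r + 1) : ℚ)) * ((r : ℚ) + 1)
        = ((M + 1).choose r : ℚ) * (((M + 1 - r : ℕ)) : ℚ) := by exact_mod_cast this
    rw [Nat.cast_sub h] at hc
    push_cast at hc ⊢
    linarith [hc]
  · rw [Nat.choose_eq_zero_of_lt h, Nat.choose_eq_zero_of_lt (by omega)]
    simp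
lemma choose_cast2 (M r : ℕ) :
    ((M.choose r : ℚ)) * ((M : ℚ) + 1) = ((M : ℚ) + 1 - r) * ((M + 1).choose r : ℚ) := by
  rcases le_or_gt r (M + 1) with h | h
  · have := Nat.choose_mul_succ_eq M r
    have hc : ((M.choose r : ℚ)) * ((M : ℚ) + 1)
        = ((M + 1).choose r : ℚ) * (((M + 1 - r : ℕ)) : ℚ) := by exact_mod_cast this
    rw [Nat.cast_sub h] at hc
    push_cast at hc ⊢
    linarith [hc]
  · rw [Nat.choose_eq_zero_of_lt (by omega), Nat.choose_eq_zero_of_lt h]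
    simp

lemma key (M r : ℕ) :
    Aq (M + 1) r - (2 * (M : ℚ) - 1) / (2 * M + 2) * Aq M r = Gq M (r + 1) - Gq M r := by
  have hch1 : (((M + 1).choose (r + 1) : ℚ)) =
      ((M : ℚ) + 1 - r) * ((M + 1).choose r : ℚ) / (r + 1) := by
    rw [eq_div_iff (by positivity)]; exact choose_cast1 M r
  have hch2 : ((M.choose r : ℚ)) =
      ((M : ℚ) + 1 - r) * ((M + 1).choose r : ℚ) / ((M : ℚ) + 1) := by
    rw [eq_div_iff (by positivity)]
    exact choose_cast2 M r
  have hfac : ((2 * (r + 1) + 1).factorial : ℚ)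
      = (2 * r + 3) * (2 * r + 2) * ((2 * r + 1).factorial : ℚ) := by
    have : 2 * (r + 1) + 1 = (2 * r + 2) + 1 := by ring
    rw [this, Nat.factorial_succ]
    have : 2 * r + 2 = (2 * r + 1) + 1 := by ring
    rw [this, Nat.factorial_succ]
    push_cast; ring
  have hfr : ((r + 1).factorial : ℚ) = (r + 1) * (r.factorial : ℚ) := by
    rw [Nat.factorial_succ]; push_cast; ring
  unfold Aq Gq
  rw [hfac, hfr, hch1, hch2]
  have h1 : (r.factorial : ℚ) ≠ 0 := Nat.cast_ne_zero.mpr (Nat.factorial_ne_zero r)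
  have h2 : ((M : ℚ) + 1) ≠ 0 := by positivity
  have h3 : ((r : ℚ) + 1) ≠ 0 := by positivity
  push_cast
  field_simp
  ring

theorem stmt_13 (M : ℕ) :
    Sdef M 1 = (∏ j ∈ Finset.Icc 1 M, (2 * (j : ℚ) - 3)) / ((M.factorial : ℚ) * 2 ^ M) := by
  have hS : ∀ N, Sdef N 1 = ∑ r ∈ Finset.range (N + 1), Aq N r := by
    intro N
    unfold Sdef Aq
    refine Finset.sum_congr rfl fun r _ => ?_
    have e1 : 2 * 1 + 2 * r - 1 = 2 * r + 1 := by omega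
    have e2 : 1 + r - 1 = r := by omega
    rw [e1, e2]
    norm_num
  rw [hS]
  induction M with
  | zero => simp [Aq]
  | succ M ih =>
    have hsum : ∑ r ∈ Finset.range (M + 2), Aq (M + 1) r
        = (2 * (M : ℚ) - 1) / (2 * M + 2) * ∑ r ∈ Finset.range (M + 1), Aq M r := by
      have htel : ∑ r ∈ Finset.range (M + 2), (Gq M (r + 1) - Gq M r)
          = Gq M (M + 2) - Gq M 0 := Finset.sum_range_sub (Gq M) (M + 2)
      have hG0 : Gq M 0 = 0 := by simp [Gq]
      have hGtop : Gq M (M + 2) = 0 := by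
        unfold Gq
        rw [Nat.choose_eq_zero_of_lt (by omega)]
        simp
      have hz : ∑ r ∈ Finset.range (M + 2),
          (Aq (M + 1) r - (2 * (M : ℚ) - 1) / (2 * M + 2) * Aq M r) = 0 := by
        rw [Finset.sum_congr rfl fun r _ => key M r, htel, hG0, hGtop]; ring
      rw [Finset.sum_sub_distrib, ← Finset.mul_sum] at hz
      have hAtop : Aq M (M + 1) = 0 := by
        unfold Aq
        rw [Nat.choose_eq_zero_of_lt (by omega)]
        simp
      have : ∑ r ∈ Finset.range (M + 2), Aq M r = ∑ r ∈ Finset.range (M + 1), Aq M r := by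
        rw [Finset.sum_range_succ, hAtop, add_zero]
      rw [this] at hz
      linarith [hz]
    rw [hsum, ih]
    rw [Finset.prod_Icc_succ_top (by omega), Nat.factorial_succ]
    have hf : (M.factorial : ℚ) ≠ 0 := Nat.cast_ne_zero.mpr (Nat.factorial_ne_zero M)
    have h2 : (2 : ℚ) ^ M ≠ 0 := by positivity
    have hM : (2 * (M : ℚ) + 2) ≠ 0 := by positivity
    push_cast
    field_simp
    ring
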